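/- The map Φ is a morphism of operads from recursively labelled red and white trees to formal fractions: for all recursively labelled red and white trees T₁ ∈ BWTS(m) with a label x and T₂ ∈ BWTS(n), one has Φ(T₁ ∘_x T₂) = Φ(T₁) ∘_x Φ(T₂) in FF(m+n−1). -/

import Mathlib

open scoped Classical

/-- A *formal fraction*: a finitely supported exponent function on formal symbols `[S]`,
where `S` is a finset of positive integers.  The fraction `∏_S [S]^(e_S)` is encoded by
the function `S ↦ e_S`; multiplication of fractions is addition of exponent functions. -/
abbrev FFrac : Type := Finset ℕ →₀ ℤ

/-- `F` is a formal fraction of arity `n`: all its symbols are nonempty subsets of `{1,…,n}`. -/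
def MemFF (n : ℕ) (F : FFrac) : Prop :=
  ∀ S ∈ F.support, S.Nonempty ∧ S ⊆ Finset.Icc 1 n

/-- Symbol relabelling for the left factor of `∘ᵢ` with an arity-`n` fraction:
indices `j < i` are fixed, `i` is replaced by the whole block `{i,…,i+n-1}`, and
`j > i` is replaced by `j + n - 1`. -/
def subSym (i n : ℕ) (T : Finset ℕ) : Finset ℕ :=
  T.biUnion fun j =>
    if j < i then {j} else if j = i then Finset.Icc i (i + n - 1) else {j + n - 1}

/-- Symbol relabelling for the right factor of `∘ᵢ`: `j ↦ i + j - 1`. -/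
def shiftSym (i : ℕ) (T : Finset ℕ) : Finset ℕ := T.image fun j => i + j - 1

/-- Composition of formal fractions: `F ∘ᵢ G = [S_{i,n}] ⬝ F̂ ⬝ Ĝ`, where `n` is the arity
of `G`.  (`Finsupp.mapDomain` adds the exponents of symbols which become equal.) -/
noncomputable def ffCompose (n i : ℕ) (F G : FFrac) : FFrac :=
  Finsupp.single (Finset.Icc i (i + n - 1)) 1
    + Finsupp.mapDomain (subSym i n) F
    + Finsupp.mapDomain (shiftSym i) G

/-- The formal fraction `1/[1] ∈ FF(1)`. -/
noncomputable def ffUnit : FFrac := Finsupp.single {1} (-1)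

/- A labelled red and white tree on `{1,…,n}` is encoded by the (laminar) family of the
sets `S(z)` of all labels carried by the subtree rooted at each node `z`; this determines
the tree completely (children of a node are the maximal proper members of the family
below it, its own labels are those not appearing in its children, and the condition that
an unlabelled node has at least two children is automatic). -/

/-- The children of the node `S` in the family `fam`: maximal members strictly below `S`. -/
def childrenF (fam : Finset (Finset ℕ)) (S : Finset ℕ) : Finset (Finset ℕ) :=
  fam.filter fun T => T ⊂ S ∧ ∀ U ∈ fam, T ⊂ U → ¬ U ⊂ S

/-- The set of labels carried by the node `S` itself. -/
def labelsOf (fam : Finset (Finset ℕ)) (S : Finset ℕ) : Finset ℕ :=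
  S \ (childrenF fam S).biUnion id

/-- `fam` encodes a labelled red and white tree on `{1,…,n}` (`fam ∈ BWTSL(n)`). -/
def IsRWTree (n : ℕ) (fam : Finset (Finset ℕ)) : Prop :=
  (∀ S ∈ fam, S.Nonempty ∧ S ⊆ Finset.Icc 1 n) ∧
  Finset.Icc 1 n ∈ fam ∧
  ∀ S ∈ fam, ∀ T ∈ fam, S ⊆ T ∨ T ⊆ S ∨ Disjoint S T

/-- The tree is recursively labelled: the total label set of every subtree is an
interval of consecutive integers. -/
def IsRecursive (fam : Finset (Finset ℕ)) : Prop :=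
  ∀ S ∈ fam, ∃ a b : ℕ, S = Finset.Icc a b

/-- The node `S` is red: it carries no label and all of its children are white. -/
def IsRed (fam : Finset (Finset ℕ)) (S : Finset ℕ) : Prop :=
  labelsOf fam S = ∅ ∧ ∀ T ∈ childrenF fam S, ¬ IsRed fam T
termination_by S.card
decreasing_by
  rename_i hT
  exact Finset.card_lt_card (Finset.mem_filter.mp hT).2.1

/-- Relabelling of the first tree in `T₁ ∘ₓ T₂` (`n` the arity of `T₂`): labels `j > x`
are shifted by `n - 1` and the label `x` becomes the whole block `{x,…,x+n-1}`. -/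
def relabL (x n : ℕ) (T : Finset ℕ) : Finset ℕ :=
  T.biUnion fun j =>
    if j < x then {j} else if j = x then Finset.Icc x (x + n - 1) else {j + n - 1}

/-- Relabelling of the second tree in `T₁ ∘ₓ T₂`: labels are shifted by `x - 1`. -/
def relabR (x : ℕ) (T : Finset ℕ) : Finset ℕ := T.image fun j => x + j - 1

/-- The composition `T₁ ∘ₓ T₂` of labelled red and white trees (in the laminar-family
encoding), `n` being the arity of `T₂`.  The four cases correspond to the rules
(R1), (R3), (R2) and (W) respectively:  if the root of `T₂` is red then the result is
`T₂` when `T₁` is the single node labelled `x` (R1); the node `z` of `T₁` containing `x`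
is deleted and the children of the root of `T₂` are attached to its parent when `z` is a
leaf whose only label is `x` (R3); otherwise the root of `T₂` becomes a new child of `z`
(R2).  If the root of `T₂` is not red, it is merged with `z` (W). -/
noncomputable def rwCompose (n x : ℕ) (fam₁ fam₂ : Finset (Finset ℕ)) :
    Finset (Finset ℕ) :=
  let B : Finset ℕ := Finset.Icc x (x + n - 1)
  let f₁ := fam₁.image (relabL x n)
  let f₂ := fam₂.image (relabR x)
  if IsRed fam₂ (Finset.Icc 1 n) then
    if fam₁ = {{x}} then f₂
    else if {x} ∈ fam₁ then (f₁ \ {B}) ∪ (f₂ \ {B})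
    else f₁ ∪ f₂
  else f₁ ∪ (f₂ \ {B})

/-- The unit: the single node labelled `{1}`. -/
def unitT : Finset (Finset ℕ) := {{1}}
/-- `T_≺`: white root labelled `{1}` with a single white child labelled `{2}`. -/
def Tprec : Finset (Finset ℕ) := {{1, 2}, {2}}
/-- `T_≻`: white root labelled `{2}` with a single white child labelled `{1}`. -/
def Tsucc : Finset (Finset ℕ) := {{1, 2}, {1}}
/-- `T_∘`: a single white node labelled `{1,2}`. -/
def Tmid : Finset (Finset ℕ) := {{1, 2}}
/-- `T_⊙`: red empty root with two white children labelled `{1}` and `{2}`. -/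
def Tdot : Finset (Finset ℕ) := {{1, 2}, {1}, {2}}

/-- The map `Φ` from labelled red and white trees to formal fractions: each white node
`z` contributes `[S(z)]⁻¹`, each non-root red node contributes `[S(z)]`, and a red root
contributes `1`. -/
noncomputable def PhiT (n : ℕ) (fam : Finset (Finset ℕ)) : FFrac :=
  ∑ S ∈ fam, Finsupp.single S
    (if IsRed fam S then (if S = Finset.Icc 1 n then 0 else 1) else (-1 : ℤ))


section AuxProof
open Finset
open scoped Classical
open Finset

section RelF
variable (g : ℕ → Finset ℕ)

def relF (S : Finset ℕ) : Finset ℕ := S.biUnion g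

variable (hg : ∀ j k a, a ∈ g j → a ∈ g k → j = k) (hne : ∀ j, (g j).Nonempty)

lemma mem_relF {a : ℕ} {S : Finset ℕ} : a ∈ relF g S ↔ ∃ j ∈ S, a ∈ g j :=
  Finset.mem_biUnion

include hg hne in
lemma relF_subset_iff {S T : Finset ℕ} : relF g S ⊆ relF g T ↔ S ⊆ T := by
  constructor
  · intro h j hj
    obtain ⟨a, ha⟩ := hne j
    obtain ⟨k, hk, hak⟩ := (mem_relF g).1 (h ((mem_relF g).2 ⟨j, hj, ha⟩))
    rwa [hg j k a ha hak]
  · intro h a ha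
    obtain ⟨j, hj, haj⟩ := (mem_relF g).1 ha
    exact (mem_relF g).2 ⟨j, h hj, haj⟩

include hg hne in
lemma relF_inj : Function.Injective (relF g) := by
  intro S T h
  exact subset_antisymm ((relF_subset_iff g hg hne).1 h.le)
    ((relF_subset_iff g hg hne).1 h.ge)

include hg hne in
lemma relF_ssubset_iff {S T : Finset ℕ} : relF g S ⊂ relF g T ↔ S ⊂ T := by
  rw [Finset.ssubset_iff_subset_ne, Finset.ssubset_iff_subset_ne,
    relF_subset_iff g hg hne]
  simp only [ne_eq, (relF_inj g hg hne).eq_iff]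

lemma relF_union (S T : Finset ℕ) : relF g (S ∪ T) = relF g S ∪ relF g T := by
  ext a
  simp only [mem_relF, Finset.mem_union]
  constructor
  · rintro ⟨j, h | h, haj⟩
    exacts [Or.inl ⟨j, h, haj⟩, Or.inr ⟨j, h, haj⟩]
  · rintro (⟨j, hj, haj⟩ | ⟨j, hj, haj⟩)
    exacts [⟨j, Or.inl hj, haj⟩, ⟨j, Or.inr hj, haj⟩]

include hg in
lemma relF_sdiff (S T : Finset ℕ) : relF g (S \ T) = relF g S \ relF g T := by
  ext a
  simp only [mem_relF, Finset.mem_sdiff]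
  constructor
  · rintro ⟨j, hj, haj⟩
    refine ⟨⟨j, hj.1, haj⟩, ?_⟩
    rintro ⟨k, hk, hak⟩
    exact hj.2 ((hg j k a haj hak) ▸ hk)
  · rintro ⟨⟨j, hj, haj⟩, h⟩
    exact ⟨j, ⟨hj, fun hjT => h ⟨j, hjT, haj⟩⟩, haj⟩

include hne in
lemma relF_eq_empty_iff {S : Finset ℕ} : relF g S = ∅ ↔ S = ∅ := by
  simp only [Finset.eq_empty_iff_forall_notMem, mem_relF]
  constructor
  · intro h j hj
    obtain ⟨a, ha⟩ := hne j
    exact h a ⟨j, hj, ha⟩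
  · rintro h a ⟨j, hj, _⟩
    exact h j hj

include hg hne in
lemma relF_disjoint_iff {S T : Finset ℕ} :
    Disjoint (relF g S) (relF g T) ↔ Disjoint S T := by
  rw [Finset.disjoint_left, Finset.disjoint_left]
  constructor
  · intro h j hjS hjT
    obtain ⟨a, ha⟩ := hne j
    exact h ((mem_relF g).2 ⟨j, hjS, ha⟩) ((mem_relF g).2 ⟨j, hjT, ha⟩)
  · intro h a haS haT
    obtain ⟨j, hj, haj⟩ := (mem_relF g).1 haS
    obtain ⟨k, hk, hak⟩ := (mem_relF g).1 haT
    exact h hj ((hg j k a haj hak) ▸ hk)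

end RelF

theorem isRed_iff (fam : Finset (Finset ℕ)) (S : Finset ℕ) :
    IsRed fam S ↔ labelsOf fam S = ∅ ∧ ∀ T ∈ childrenF fam S, ¬ IsRed fam T := by
  rw [IsRed]

lemma mem_childrenF {fam : Finset (Finset ℕ)} {S T : Finset ℕ} :
    T ∈ childrenF fam S ↔ T ∈ fam ∧ T ⊂ S ∧ ∀ U ∈ fam, T ⊂ U → ¬ U ⊂ S := by
  simp [childrenF]

lemma childrenF_empty (fam : Finset (Finset ℕ)) : childrenF fam ∅ = ∅ := by
  ext T
  simp only [mem_childrenF, Finset.notMem_empty, iff_false]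
  rintro ⟨-, h, -⟩
  exact (Finset.not_ssubset_empty T) h

lemma labelsOf_empty (fam : Finset (Finset ℕ)) : labelsOf fam ∅ = ∅ := by
  simp [labelsOf]

lemma childrenF_congr {fam fam' : Finset (Finset ℕ)} {S : Finset ℕ}
    (h : ∀ T, T ⊂ S → (T ∈ fam ↔ T ∈ fam')) : childrenF fam S = childrenF fam' S := by
  ext T
  simp only [mem_childrenF]
  constructor
  · rintro ⟨hT, hTS, hmax⟩
    exact ⟨(h T hTS).1 hT, hTS, fun U hU hTU hUS => hmax U ((h U hUS).2 hU) hTU hUS⟩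
  · rintro ⟨hT, hTS, hmax⟩
    exact ⟨(h T hTS).2 hT, hTS, fun U hU hTU hUS => hmax U ((h U hUS).1 hU) hTU hUS⟩

lemma isRed_congr_aux {fam fam' : Finset (Finset ℕ)} :
    ∀ (k : ℕ) (S : Finset ℕ), S.card ≤ k →
      (∀ T, T ⊂ S → (T ∈ fam ↔ T ∈ fam')) → (IsRed fam S ↔ IsRed fam' S) := by
  intro k
  induction k with
  | zero =>
    intro S hS h
    rw [Finset.card_eq_zero.1 (Nat.le_zero.1 hS)]
    rw [isRed_iff, isRed_iff, childrenF_empty, childrenF_empty]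
    simp [labelsOf_empty]
  | succ k ih =>
    intro S hS h
    rw [isRed_iff, isRed_iff, childrenF_congr h, labelsOf, labelsOf, childrenF_congr h]
    refine and_congr Iff.rfl (forall₂_congr fun T hT => ?_)
    have hTS : T ⊂ S := (mem_childrenF.1 hT).2.1
    have : T.card ≤ k := Nat.lt_succ_iff.1 (lt_of_lt_of_le (Finset.card_lt_card hTS) hS)
    exact not_congr (ih T this fun T' hT' => h T' (hT'.trans hTS))

lemma isRed_congr {fam fam' : Finset (Finset ℕ)} {S : Finset ℕ}
    (h : ∀ T, T ⊂ S → (T ∈ fam ↔ T ∈ fam')) : IsRed fam S ↔ IsRed fam' S :=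
  isRed_congr_aux S.card S le_rfl h

/-- L5: every member strictly below `S` lies below a child of `S`. -/
lemma exists_child_above {fam : Finset (Finset ℕ)} {S T : Finset ℕ}
    (hT : T ∈ fam) (hTS : T ⊂ S) : ∃ c ∈ childrenF fam S, T ⊆ c := by
  classical
  set A := fam.filter fun U => T ⊆ U ∧ U ⊂ S with hA
  have hAne : A.Nonempty := ⟨T, by simp [hA, hT, hTS]⟩
  obtain ⟨c, hcA, hcmax⟩ := Finset.exists_max_image A Finset.card hAne
  simp only [hA, Finset.mem_filter] at hcA
  refine ⟨c, mem_childrenF.2 ⟨hcA.1, hcA.2.2, ?_⟩, hcA.2.1⟩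
  intro U hU hcU hUS
  have : U ∈ A := by simp [hA, hU, hcA.2.1.trans hcU.subset, hUS]
  exact absurd (hcmax U this) (not_le.2 (Finset.card_lt_card hcU))

lemma label_not_in_below {fam : Finset (Finset ℕ)} {S T : Finset ℕ} {a : ℕ}
    (hT : T ∈ fam) (hTS : T ⊂ S) (haT : a ∈ T) (hlab : a ∈ labelsOf fam S) : False := by
  obtain ⟨c, hc, hTc⟩ := exists_child_above hT hTS
  have : a ∈ (childrenF fam S).biUnion id := Finset.mem_biUnion.2 ⟨c, hc, hTc haT⟩
  exact (Finset.mem_sdiff.1 hlab).2 this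

lemma exists_child_of_not_label {fam : Finset (Finset ℕ)} {S : Finset ℕ} {a : ℕ}
    (haS : a ∈ S) (h : a ∉ labelsOf fam S) : ∃ c ∈ childrenF fam S, a ∈ c := by
  rw [labelsOf, Finset.mem_sdiff] at h
  push_neg at h
  exact Finset.mem_biUnion.1 (h haS)

/-- laminar member below `S` containing a point of a child lies inside that child. -/
lemma member_subset_child {fam : Finset (Finset ℕ)} {S S' c : Finset ℕ} {a : ℕ}
    (hlam : ∀ A ∈ fam, ∀ B ∈ fam, A ⊆ B ∨ B ⊆ A ∨ Disjoint A B)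
    (hS' : S' ∈ fam) (hS'S : S' ⊂ S) (hc : c ∈ childrenF fam S)
    (ha : a ∈ S') (hac : a ∈ c) : S' ⊆ c := by
  rcases hlam S' hS' c (mem_childrenF.1 hc).1 with h | h | h
  · exact h
  · rcases eq_or_ssubset_of_subset h with h' | h'
    · exact h'.ge
    · exact absurd hS'S ((mem_childrenF.1 hc).2.2 S' hS' h')
  · exact absurd hac (Finset.disjoint_left.1 h ha)

section Image
variable {g : ℕ → Finset ℕ}
variable (hg : ∀ j k a, a ∈ g j → a ∈ g k → j = k) (hne : ∀ j, (g j).Nonempty)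

include hg hne

lemma childrenF_image (fam : Finset (Finset ℕ)) (S : Finset ℕ) :
    childrenF (fam.image (relF g)) (relF g S) = (childrenF fam S).image (relF g) := by
  ext V
  simp only [mem_childrenF, Finset.mem_image]
  constructor
  · rintro ⟨⟨T, hT, rfl⟩, hTS, hmax⟩
    refine ⟨T, ⟨hT, (relF_ssubset_iff g hg hne).1 hTS, ?_⟩, rfl⟩
    intro U hU hTU hUS
    exact hmax (relF g U) ⟨U, hU, rfl⟩ ((relF_ssubset_iff g hg hne).2 hTU)
      ((relF_ssubset_iff g hg hne).2 hUS)
  · rintro ⟨T, ⟨hT, hTS, hmax⟩, rfl⟩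
    refine ⟨⟨T, hT, rfl⟩, (relF_ssubset_iff g hg hne).2 hTS, ?_⟩
    rintro V ⟨U, hU, rfl⟩ hTU hUS
    exact hmax U hU ((relF_ssubset_iff g hg hne).1 hTU) ((relF_ssubset_iff g hg hne).1 hUS)

lemma labelsOf_image (fam : Finset (Finset ℕ)) (S : Finset ℕ) :
    labelsOf (fam.image (relF g)) (relF g S) = relF g (labelsOf fam S) := by
  rw [labelsOf, labelsOf, childrenF_image hg hne, relF_sdiff g hg]
  congr 1
  ext a
  simp only [Finset.mem_biUnion, Finset.mem_image, id_eq, mem_relF]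
  constructor
  · rintro ⟨V, ⟨T, hT, rfl⟩, ha⟩
    obtain ⟨j, hj, haj⟩ := (mem_relF g).1 ha
    exact ⟨j, ⟨T, hT, hj⟩, haj⟩
  · rintro ⟨j, ⟨T, hT, hjT⟩, haj⟩
    exact ⟨relF g T, ⟨T, hT, rfl⟩, (mem_relF g).2 ⟨j, hjT, haj⟩⟩

lemma isRed_image_aux (fam : Finset (Finset ℕ)) :
    ∀ (k : ℕ) (S : Finset ℕ), S.card ≤ k →
      (IsRed (fam.image (relF g)) (relF g S) ↔ IsRed fam S) := by
  intro k
  induction k with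
  | zero =>
    intro S hS
    have : S = ∅ := Finset.card_eq_zero.1 (Nat.le_zero.1 hS)
    subst this
    have h0 : relF g (∅ : Finset ℕ) = ∅ := by simp [relF]
    rw [h0, isRed_iff, isRed_iff, childrenF_empty, childrenF_empty]
    simp [labelsOf_empty]
  | succ k ih =>
    intro S hS
    rw [isRed_iff, isRed_iff, childrenF_image hg hne, labelsOf_image hg hne,
      relF_eq_empty_iff g hne]
    refine and_congr Iff.rfl ?_
    constructor
    · intro h T hT
      have hTS : T ⊂ S := (mem_childrenF.1 hT).2.1
      have hk : T.card ≤ k := Nat.lt_succ_iff.1 (lt_of_lt_of_le (Finset.card_lt_card hTS) hS)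
      exact fun hr => h (relF g T) (Finset.mem_image_of_mem _ hT) ((ih T hk).2 hr)
    · rintro h V hV hr
      obtain ⟨T, hT, rfl⟩ := Finset.mem_image.1 hV
      have hTS : T ⊂ S := (mem_childrenF.1 hT).2.1
      have hk : T.card ≤ k := Nat.lt_succ_iff.1 (lt_of_lt_of_le (Finset.card_lt_card hTS) hS)
      exact h T hT ((ih T hk).1 hr)

lemma isRed_image (fam : Finset (Finset ℕ)) (S : Finset ℕ) :
    IsRed (fam.image (relF g)) (relF g S) ↔ IsRed fam S :=
  isRed_image_aux hg hne fam S.card S le_rfl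

end Image
def gL (x n j : ℕ) : Finset ℕ :=
  if j < x then {j} else if j = x then Finset.Icc x (x + n - 1) else {j + n - 1}

def gR (x j : ℕ) : Finset ℕ := {x + j - 1}

lemma mem_gL {x n j a : ℕ} (hn : 1 ≤ n) :
    a ∈ gL x n j ↔ (j < x ∧ a = j) ∨ (j = x ∧ x ≤ a ∧ a ≤ x + n - 1) ∨
      (x < j ∧ a = j + n - 1) := by
  unfold gL
  split_ifs with h1 h2 <;> simp [Finset.mem_Icc] <;> omega

lemma hgL {x n : ℕ} (hn : 1 ≤ n) : ∀ j k a, a ∈ gL x n j → a ∈ gL x n k → j = k := by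
  intro j k a hj hk
  rw [mem_gL hn] at hj hk
  omega

lemma hneL {x n : ℕ} (hn : 1 ≤ n) : ∀ j, (gL x n j).Nonempty := by
  intro j
  unfold gL
  split_ifs <;> simp [Finset.nonempty_Icc] <;> omega

lemma hgR {x : ℕ} (hx : 1 ≤ x) : ∀ j k a, a ∈ gR x j → a ∈ gR x k → j = k := by
  intro j k a hj hk
  simp only [gR, Finset.mem_singleton] at hj hk
  omega

lemma hneR {x : ℕ} : ∀ j, (gR x j).Nonempty := fun j => ⟨x + j - 1, by simp [gR]⟩
lemma relabL_eq (x n : ℕ) : relabL x n = relF (gL x n) := rfl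

lemma relabR_eq (x : ℕ) : relabR x = relF (gR x) := by
  funext T
  ext a
  simp [relabR, relF, gR, eq_comm]

section Facts
variable {x n m : ℕ} (hx : 1 ≤ x) (hn : 1 ≤ n)

include hn in
lemma relabL_subset_iff {S T : Finset ℕ} : relabL x n S ⊆ relabL x n T ↔ S ⊆ T := by
  rw [relabL_eq]; exact relF_subset_iff _ (hgL hn) (hneL hn)

include hn in
lemma relabL_ssubset_iff {S T : Finset ℕ} : relabL x n S ⊂ relabL x n T ↔ S ⊂ T := by
  rw [relabL_eq]; exact relF_ssubset_iff _ (hgL hn) (hneL hn)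

include hn in
lemma relabL_inj : Function.Injective (relabL x n) := by
  rw [relabL_eq]; exact relF_inj _ (hgL hn) (hneL hn)

include hn in
lemma relabL_eq_empty_iff {S : Finset ℕ} : relabL x n S = ∅ ↔ S = ∅ := by
  rw [relabL_eq]; exact relF_eq_empty_iff _ (hneL hn)

include hx in
lemma relabR_subset_iff {S T : Finset ℕ} : relabR x S ⊆ relabR x T ↔ S ⊆ T := by
  rw [relabR_eq]; exact relF_subset_iff _ (hgR hx) hneR

include hx in
lemma relabR_ssubset_iff {S T : Finset ℕ} : relabR x S ⊂ relabR x T ↔ S ⊂ T := by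
  rw [relabR_eq]; exact relF_ssubset_iff _ (hgR hx) hneR

include hx in
lemma relabR_inj : Function.Injective (relabR x) := by
  rw [relabR_eq]; exact relF_inj _ (hgR hx) hneR

lemma relabR_eq_empty_iff {S : Finset ℕ} : relabR x S = ∅ ↔ S = ∅ := by
  rw [relabR_eq]; exact relF_eq_empty_iff _ hneR

lemma gL_x : gL x n x = Finset.Icc x (x + n - 1) := by simp [gL]

lemma relabL_singleton : relabL x n {x} = Finset.Icc x (x + n - 1) := by
  rw [relabL_eq]
  show ({x} : Finset ℕ).biUnion (gL x n) = _
  rw [Finset.singleton_biUnion, gL_x]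

lemma B_subset_relabL {S : Finset ℕ} (hxS : x ∈ S) :
    Finset.Icc x (x + n - 1) ⊆ relabL x n S := by
  rw [relabL_eq]
  exact gL_x ▸ Finset.subset_biUnion_of_mem (gL x n) hxS

include hn in
lemma disjoint_relabL_B {S : Finset ℕ} (hxS : x ∉ S) :
    Disjoint (relabL x n S) (Finset.Icc x (x + n - 1)) := by
  rw [Finset.disjoint_left]
  intro a ha haB
  rw [relabL_eq] at ha
  obtain ⟨j, hj, haj⟩ := (mem_relF _).1 ha
  have : a ∈ gL x n x := gL_x ▸ haB
  exact hxS ((hgL hn j x a haj this) ▸ hj)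

include hx hn in
lemma relabL_Icc (hxm : x ≤ m) : relabL x n (Finset.Icc 1 m) = Finset.Icc 1 (m + n - 1) := by
  rw [relabL_eq]
  ext a
  rw [mem_relF, Finset.mem_Icc]
  constructor
  · rintro ⟨j, hj, haj⟩
    rw [Finset.mem_Icc] at hj
    rw [mem_gL hn] at haj
    omega
  · intro ha
    by_cases h1 : a < x
    · exact ⟨a, Finset.mem_Icc.2 (by omega), (mem_gL hn).2 (Or.inl ⟨h1, rfl⟩)⟩
    by_cases h2 : a ≤ x + n - 1
    · exact ⟨x, Finset.mem_Icc.2 (by omega), (mem_gL hn).2 (Or.inr (Or.inl (by omega)))⟩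
    · exact ⟨a - n + 1, Finset.mem_Icc.2 (by omega),
        (mem_gL hn).2 (Or.inr (Or.inr (by omega)))⟩

include hx in
lemma relabR_Icc : relabR x (Finset.Icc 1 n) = Finset.Icc x (x + n - 1) := by
  ext a
  simp only [relabR, Finset.mem_image, Finset.mem_Icc]
  constructor
  · rintro ⟨j, hj, rfl⟩
    omega
  · intro ha
    exact ⟨a - x + 1, by omega, by omega⟩

include hx in
lemma relabR_subset_B {T : Finset ℕ} (hT : T ⊆ Finset.Icc 1 n) :
    relabR x T ⊆ Finset.Icc x (x + n - 1) := by
  rw [← relabR_Icc hx]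
  exact Finset.image_subset_image hT

include hn in
lemma relabL_subset_B {S : Finset ℕ} (hne : S.Nonempty)
    (h : relabL x n S ⊆ Finset.Icc x (x + n - 1)) : S = {x} := by
  have key : ∀ j ∈ S, j = x := by
    intro j hj
    obtain ⟨a, ha⟩ := hneL (x := x) hn j
    have haS : a ∈ relabL x n S := by
      rw [relabL_eq]; exact (mem_relF _).2 ⟨j, hj, ha⟩
    have haB : a ∈ gL x n x := gL_x ▸ h haS
    exact hgL hn j x a ha haB
  obtain ⟨j, hj⟩ := hne
  rw [Finset.eq_singleton_iff_unique_mem]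
  exact ⟨(key j hj) ▸ hj, key⟩

lemma B_nonempty (hn : 1 ≤ n) : (Finset.Icc x (x + n - 1)).Nonempty :=
  Finset.nonempty_Icc.2 (by omega)

end Facts
structure Ctx (m n x : ℕ) (fam₁ fam₂ : Finset (Finset ℕ)) : Prop where
  hx : 1 ≤ x
  hxm : x ≤ m
  h₁ : IsRWTree m fam₁
  h₂ : IsRWTree n fam₂

namespace Ctx

variable {m n x : ℕ} {fam₁ fam₂ : Finset (Finset ℕ)} (C : Ctx m n x fam₁ fam₂)

include C

lemma hn : 1 ≤ n := by
  have := (C.h₂.1 _ C.h₂.2.1).1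
  rw [Finset.nonempty_Icc] at this
  omega

lemma ne₁ {S : Finset ℕ} (hS : S ∈ fam₁) : S.Nonempty := (C.h₁.1 S hS).1
lemma sub₁ {S : Finset ℕ} (hS : S ∈ fam₁) : S ⊆ Finset.Icc 1 m := (C.h₁.1 S hS).2
lemma ne₂ {S : Finset ℕ} (hS : S ∈ fam₂) : S.Nonempty := (C.h₂.1 S hS).1
lemma sub₂ {S : Finset ℕ} (hS : S ∈ fam₂) : S ⊆ Finset.Icc 1 n := (C.h₂.1 S hS).2
lemma lam₁ : ∀ S ∈ fam₁, ∀ T ∈ fam₁, S ⊆ T ∨ T ⊆ S ∨ Disjoint S T := C.h₁.2.2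

lemma f₂_subset_B {V : Finset ℕ} (hV : V ∈ fam₂.image (relabR x)) :
    V ⊆ Finset.Icc x (x + n - 1) := by
  obtain ⟨T, hT, rfl⟩ := Finset.mem_image.1 hV
  exact relabR_subset_B C.hx (C.sub₂ hT)

lemma f₂_nonempty {V : Finset ℕ} (hV : V ∈ fam₂.image (relabR x)) : V.Nonempty := by
  obtain ⟨T, hT, rfl⟩ := Finset.mem_image.1 hV
  exact (C.ne₂ hT).image _

lemma f₁_nonempty {V : Finset ℕ} (hV : V ∈ fam₁.image (relabL x n)) : V.Nonempty := by
  obtain ⟨T, hT, rfl⟩ := Finset.mem_image.1 hV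
  rw [Finset.nonempty_iff_ne_empty, Ne, relabL_eq_empty_iff C.hn]
  exact (C.ne₁ hT).ne_empty

lemma f₁_cap_B {V : Finset ℕ} (hV : V ∈ fam₁.image (relabL x n))
    (h : V ⊆ Finset.Icc x (x + n - 1)) : V = Finset.Icc x (x + n - 1) := by
  obtain ⟨T, hT, rfl⟩ := Finset.mem_image.1 hV
  rw [relabL_subset_B C.hn (C.ne₁ hT) h]
  exact relabL_singleton

lemma B_mem_f₂ : Finset.Icc x (x + n - 1) ∈ fam₂.image (relabR x) :=
  relabR_Icc C.hx ▸ Finset.mem_image_of_mem _ C.h₂.2.1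

lemma comp_subset : rwCompose n x fam₁ fam₂ ⊆
    fam₁.image (relabL x n) ∪ fam₂.image (relabR x) := by
  intro V hV
  simp only [rwCompose] at hV
  split_ifs at hV with h1 h2 h3
  · exact Finset.mem_union_right _ hV
  · rcases Finset.mem_union.1 hV with h | h
    · exact Finset.mem_union_left _ (Finset.mem_sdiff.1 h).1
    · exact Finset.mem_union_right _ (Finset.mem_sdiff.1 h).1
  · exact hV
  · rcases Finset.mem_union.1 hV with h | h
    · exact Finset.mem_union_left _ h
    · exact Finset.mem_union_right _ (Finset.mem_sdiff.1 h).1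

lemma f₂_sdiff_subset_comp :
    fam₂.image (relabR x) \ {Finset.Icc x (x + n - 1)} ⊆ rwCompose n x fam₁ fam₂ := by
  intro V hV
  simp only [rwCompose]
  split_ifs with h1 h2 h3
  · exact (Finset.mem_sdiff.1 hV).1
  · exact Finset.mem_union_right _ hV
  · exact Finset.mem_union_right _ (Finset.mem_sdiff.1 hV).1
  · exact Finset.mem_union_right _ hV

lemma mem_comp_of_f₁ {V : Finset ℕ} (hV : V ∈ fam₁.image (relabL x n))
    (hVB : V ≠ Finset.Icc x (x + n - 1)) : V ∈ rwCompose n x fam₁ fam₂ := by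
  simp only [rwCompose]
  split_ifs with h1 h2 h3
  · exfalso
    rw [h2, Finset.image_singleton, relabL_singleton] at hV
    exact hVB (Finset.mem_singleton.1 hV)
  · exact Finset.mem_union_left _ (Finset.mem_sdiff.2 ⟨hV, by simpa using hVB⟩)
  · exact Finset.mem_union_left _ hV
  · exact Finset.mem_union_left _ hV

lemma f₁_subset_comp_W (h : ¬ IsRed fam₂ (Finset.Icc 1 n)) :
    fam₁.image (relabL x n) ⊆ rwCompose n x fam₁ fam₂ := by
  intro V hV
  simp only [rwCompose, if_neg h]
  exact Finset.mem_union_left _ hV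

lemma comp_eq_R3 (h1 : IsRed fam₂ (Finset.Icc 1 n)) (h2 : fam₁ ≠ {{x}})
    (h3 : {x} ∈ fam₁) :
    rwCompose n x fam₁ fam₂ =
      (fam₁.image (relabL x n) \ {Finset.Icc x (x + n - 1)}) ∪
        (fam₂.image (relabR x) \ {Finset.Icc x (x + n - 1)}) := by
  simp only [rwCompose, if_pos h1, if_neg h2, if_pos h3]

lemma isRed_f₁ (S : Finset ℕ) :
    IsRed (fam₁.image (relabL x n)) (relabL x n S) ↔ IsRed fam₁ S := by
  rw [relabL_eq]
  exact isRed_image (hgL C.hn) (hneL C.hn) fam₁ S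

lemma isRed_f₂ (S : Finset ℕ) :
    IsRed (fam₂.image (relabR x)) (relabR x S) ↔ IsRed fam₂ S := by
  rw [relabR_eq]
  exact isRed_image (hgR C.hx) hneR fam₂ S

/-- M1: colours on the `T₂`-side are preserved. -/
lemma isRed_comp_f₂ {T : Finset ℕ} (hT : T ∈ fam₂) (hTn : T ≠ Finset.Icc 1 n) :
    IsRed (rwCompose n x fam₁ fam₂) (relabR x T) ↔ IsRed fam₂ T := by
  have hTB : relabR x T ⊆ Finset.Icc x (x + n - 1) := relabR_subset_B C.hx (C.sub₂ hT)
  have hTB' : relabR x T ≠ Finset.Icc x (x + n - 1) := fun h =>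
    hTn (relabR_inj C.hx (h.trans (relabR_Icc C.hx).symm))
  have trace : ∀ V, V ⊂ relabR x T →
      (V ∈ rwCompose n x fam₁ fam₂ ↔ V ∈ fam₂.image (relabR x)) := by
    intro V hV
    constructor
    · intro h
      rcases Finset.mem_union.1 (C.comp_subset h) with h' | h'
      · exfalso
        have hVB : V = Finset.Icc x (x + n - 1) :=
          C.f₁_cap_B h' (hV.subset.trans hTB)
        rw [hVB] at hV
        exact hTB' (subset_antisymm hTB hV.subset)
      · exact h'
    · intro h
      refine C.f₂_sdiff_subset_comp (Finset.mem_sdiff.2 ⟨h, ?_⟩)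
      simp only [Finset.mem_singleton]
      rintro rfl
      exact (hV.trans_subset hTB).false
  exact (isRed_congr trace).trans (C.isRed_f₂ T)

/-- colour of the block `B` in the composition. -/
lemma isRed_comp_B :
    IsRed (rwCompose n x fam₁ fam₂) (Finset.Icc x (x + n - 1)) ↔
      IsRed fam₂ (Finset.Icc 1 n) := by
  have trace : ∀ V, V ⊂ Finset.Icc x (x + n - 1) →
      (V ∈ rwCompose n x fam₁ fam₂ ↔ V ∈ fam₂.image (relabR x)) := by
    intro V hV
    constructor
    · intro h
      rcases Finset.mem_union.1 (C.comp_subset h) with h' | h'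
      · exact absurd (C.f₁_cap_B h' hV.subset) hV.ne
      · exact h'
    · intro h
      exact C.f₂_sdiff_subset_comp (Finset.mem_sdiff.2 ⟨h, by simpa using hV.ne⟩)
  rw [← relabR_Icc C.hx] at trace ⊢
  exact (isRed_congr trace).trans (C.isRed_f₂ _)

/-- M2: colours of `T₁`-nodes not containing `x` are preserved. -/
lemma isRed_comp_f₁_noX {S : Finset ℕ} (hS : S ∈ fam₁) (hxS : x ∉ S) :
    IsRed (rwCompose n x fam₁ fam₂) (relabL x n S) ↔ IsRed fam₁ S := by
  have hdisj := disjoint_relabL_B C.hn hxS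
  have trace : ∀ V, V ⊂ relabL x n S →
      (V ∈ rwCompose n x fam₁ fam₂ ↔ V ∈ fam₁.image (relabL x n)) := by
    intro V hV
    constructor
    · intro h
      rcases Finset.mem_union.1 (C.comp_subset h) with h' | h'
      · exact h'
      · exfalso
        have : V ⊆ ∅ := by
          have := Finset.subset_inter hV.subset (C.f₂_subset_B h')
          rwa [Finset.disjoint_iff_inter_eq_empty.1 hdisj] at this
        exact (C.f₂_nonempty h').ne_empty (Finset.subset_empty.1 this)
    · intro h
      refine C.mem_comp_of_f₁ h ?_
      rintro rfl
      exact (B_nonempty C.hn).ne_empty (Finset.subset_empty.1 (by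
        have := Finset.subset_inter hV.subset (Finset.Subset.refl _)
        rwa [Finset.disjoint_iff_inter_eq_empty.1 hdisj] at this))
  exact (isRed_congr trace).trans (C.isRed_f₁ S)

end Ctx
lemma biUnion_image_relF (g : ℕ → Finset ℕ) (C : Finset (Finset ℕ)) :
    (C.image (relF g)).biUnion id = relF g (C.biUnion id) := by
  ext a
  simp only [Finset.mem_biUnion, Finset.mem_image, id_eq, mem_relF]
  constructor
  · rintro ⟨V, ⟨T, hT, rfl⟩, ha⟩
    obtain ⟨j, hj, haj⟩ := (mem_relF g).1 ha
    exact ⟨j, ⟨T, hT, hj⟩, haj⟩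
  · rintro ⟨j, ⟨T, hT, hjT⟩, haj⟩
    exact ⟨relF g T, ⟨T, hT, rfl⟩, (mem_relF g).2 ⟨j, hjT, haj⟩⟩

namespace Ctx

variable {m n x : ℕ} {fam₁ fam₂ : Finset (Finset ℕ)} (C : Ctx m n x fam₁ fam₂)
include C

/-- uniqueness of the child containing `x`. -/
lemma child_x_unique {S c c' : Finset ℕ} (hc : c ∈ childrenF fam₁ S)
    (hc' : c' ∈ childrenF fam₁ S) (hxc : x ∈ c) (hxc' : x ∈ c') : c = c' := by
  have h1 := member_subset_child C.lam₁ (mem_childrenF.1 hc).1 (mem_childrenF.1 hc).2.1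
    hc' hxc hxc'
  have h2 := member_subset_child C.lam₁ (mem_childrenF.1 hc').1 (mem_childrenF.1 hc').2.1
    hc hxc' hxc
  exact subset_antisymm h1 h2

/-- CH1: the generic children computation. -/
lemma childrenF_comp_CH1 {S c : Finset ℕ} (hc : c ∈ childrenF fam₁ S) (hxc : x ∈ c)
    (Hc : relabL x n c ∈ rwCompose n x fam₁ fam₂) :
    childrenF (rwCompose n x fam₁ fam₂) (relabL x n S)
      = (childrenF fam₁ S).image (relabL x n) := by
  have hn := C.hn
  obtain ⟨hcf, hcS, hcmax⟩ := mem_childrenF.1 hc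
  have hBc : Finset.Icc x (x + n - 1) ⊆ relabL x n c := B_subset_relabL hxc
  have memW : ∀ W ∈ fam₁, W ≠ {x} → relabL x n W ∈ rwCompose n x fam₁ fam₂ := by
    intro W hW hWx
    exact C.mem_comp_of_f₁ (Finset.mem_image_of_mem _ hW)
      (fun hB => hWx (relabL_inj hn (hB.trans relabL_singleton.symm)))
  ext V
  constructor
  · intro hV
    obtain ⟨hVcomp, hVU, hVmax⟩ := mem_childrenF.1 hV
    rcases Finset.mem_union.1 (C.comp_subset hVcomp) with hf | hf
    · obtain ⟨T, hT, rfl⟩ := Finset.mem_image.1 hf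
      refine Finset.mem_image_of_mem _ (mem_childrenF.2
        ⟨hT, (relabL_ssubset_iff hn).1 hVU, ?_⟩)
      intro W hW hTW hWS
      have hWx : W ≠ {x} := by
        rintro rfl
        exact (C.ne₁ hT).ne_empty (Finset.ssubset_singleton_iff.1 hTW)
      exact hVmax (relabL x n W) (memW W hW hWx) ((relabL_ssubset_iff hn).2 hTW)
        ((relabL_ssubset_iff hn).2 hWS)
    · have hVB : V ⊆ relabL x n c := (C.f₂_subset_B hf).trans hBc
      have hcU : relabL x n c ⊂ relabL x n S := (relabL_ssubset_iff hn).2 hcS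
      rcases eq_or_ssubset_of_subset hVB with h | h
      · exact h ▸ Finset.mem_image_of_mem _ hc
      · exact absurd hcU (hVmax _ Hc h)
  · intro hV
    obtain ⟨T, hT, rfl⟩ := Finset.mem_image.1 hV
    obtain ⟨hTf, hTS, hTmax⟩ := mem_childrenF.1 hT
    have hTcomp : relabL x n T ∈ rwCompose n x fam₁ fam₂ := by
      by_cases hTx : T = {x}
      · have : T = c := C.child_x_unique hT hc (hTx ▸ Finset.mem_singleton_self x) hxc
        exact this ▸ Hc
      · exact memW T hTf hTx
    refine mem_childrenF.2 ⟨hTcomp, (relabL_ssubset_iff hn).2 hTS, ?_⟩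
    intro W hW hTW hWU
    rcases Finset.mem_union.1 (C.comp_subset hW) with hf | hf
    · obtain ⟨W', hW', rfl⟩ := Finset.mem_image.1 hf
      exact hTmax W' hW' ((relabL_ssubset_iff hn).1 hTW) ((relabL_ssubset_iff hn).1 hWU)
    · have h1 : relabL x n T ⊂ relabL x n c :=
        hTW.trans_subset ((C.f₂_subset_B hf).trans hBc)
      exact hTmax c hcf ((relabL_ssubset_iff hn).1 h1) hcS

/-- labels from a CH1-style children computation. -/
lemma labelsOf_comp_CH1 {S : Finset ℕ}
    (hch : childrenF (rwCompose n x fam₁ fam₂) (relabL x n S)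
      = (childrenF fam₁ S).image (relabL x n)) :
    labelsOf (rwCompose n x fam₁ fam₂) (relabL x n S) = relabL x n (labelsOf fam₁ S) := by
  rw [labelsOf, labelsOf, hch, relabL_eq, biUnion_image_relF, ← relF_sdiff _ (hgL C.hn)]

end Ctx
lemma biUnion_id_union (A B : Finset (Finset ℕ)) :
    (A ∪ B).biUnion id = A.biUnion id ∪ B.biUnion id := by
  ext a
  simp only [Finset.mem_biUnion, Finset.mem_union, id_eq]
  constructor
  · rintro ⟨V, hV | hV, ha⟩
    exacts [Or.inl ⟨V, hV, ha⟩, Or.inr ⟨V, hV, ha⟩]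
  · rintro (⟨V, hV, ha⟩ | ⟨V, hV, ha⟩)
    exacts [⟨V, Or.inl hV, ha⟩, ⟨V, Or.inr hV, ha⟩]

namespace Ctx

variable {m n x : ℕ} {fam₁ fam₂ : Finset (Finset ℕ)} (C : Ctx m n x fam₁ fam₂)
include C

/-- CH2: children computation in the (R3) surgery case. -/
lemma childrenF_comp_CH2 {S : Finset ℕ} (hred : IsRed fam₂ (Finset.Icc 1 n))
    (hne1 : fam₁ ≠ {{x}}) (hS : S ∈ fam₁) (hc : {x} ∈ childrenF fam₁ S) :
    childrenF (rwCompose n x fam₁ fam₂) (relabL x n S)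
      = ((childrenF fam₁ S).erase {x}).image (relabL x n)
        ∪ (childrenF fam₂ (Finset.Icc 1 n)).image (relabR x) := by
  have hn := C.hn
  have hx := C.hx
  have hxf : {x} ∈ fam₁ := (mem_childrenF.1 hc).1
  have hcomp := C.comp_eq_R3 hred hne1 hxf
  obtain ⟨-, hcS, hcmax⟩ := mem_childrenF.1 hc
  have hxS : x ∈ S := hcS.subset (Finset.mem_singleton_self x)
  have hSx : S ≠ {x} := fun h => hcS.ne h.symm
  have hBU : Finset.Icc x (x + n - 1) ⊂ relabL x n S := by
    refine Finset.ssubset_iff_subset_ne.2 ⟨B_subset_relabL hxS, ?_⟩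
    intro h
    exact hSx (relabL_inj hn ((relabL_singleton (x := x) (n := n)).trans h).symm)
  have key : ∀ T ∈ fam₁, T ⊂ S → x ∈ T → T = {x} := by
    intro T hT hTS hxT
    have h1 := member_subset_child C.lam₁ hT hTS hc hxT (Finset.mem_singleton_self x)
    exact subset_antisymm h1 (Finset.singleton_subset_iff.2 hxT)
  have memW : ∀ W ∈ fam₁, W ≠ {x} → relabL x n W ∈ rwCompose n x fam₁ fam₂ := by
    intro W hW hWx
    exact C.mem_comp_of_f₁ (Finset.mem_image_of_mem _ hW)
      (fun hB => hWx (relabL_inj hn (hB.trans relabL_singleton.symm)))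
  ext V
  constructor
  · intro hV
    obtain ⟨hVcomp, hVU, hVmax⟩ := mem_childrenF.1 hV
    rw [hcomp] at hVcomp
    rcases Finset.mem_union.1 hVcomp with hf | hf
    · obtain ⟨hf, hVB⟩ := Finset.mem_sdiff.1 hf
      rw [Finset.mem_singleton] at hVB
      obtain ⟨T, hT, rfl⟩ := Finset.mem_image.1 hf
      have hTx : T ≠ {x} := fun h => hVB (by rw [h, relabL_singleton])
      refine Finset.mem_union_left _ (Finset.mem_image_of_mem _ (Finset.mem_erase.2
        ⟨hTx, mem_childrenF.2 ⟨hT, (relabL_ssubset_iff hn).1 hVU, ?_⟩⟩))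
      intro W hW hTW hWS
      have hWx : W ≠ {x} := by
        rintro rfl
        exact (C.ne₁ hT).ne_empty (Finset.ssubset_singleton_iff.1 hTW)
      exact hVmax (relabL x n W) (memW W hW hWx) ((relabL_ssubset_iff hn).2 hTW)
        ((relabL_ssubset_iff hn).2 hWS)
    · obtain ⟨hf, hVB⟩ := Finset.mem_sdiff.1 hf
      rw [Finset.mem_singleton] at hVB
      obtain ⟨T, hT, rfl⟩ := Finset.mem_image.1 hf
      have hTn : T ≠ Finset.Icc 1 n := fun h => hVB (by rw [h, relabR_Icc hx])
      refine Finset.mem_union_right _ (Finset.mem_image_of_mem _ (mem_childrenF.2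
        ⟨hT, Finset.ssubset_iff_subset_ne.2 ⟨C.sub₂ hT, hTn⟩, ?_⟩))
      intro W hW hTW hWS
      have hWn : W ≠ Finset.Icc 1 n := hWS.ne
      have hmem : relabR x W ∈ rwCompose n x fam₁ fam₂ := by
        refine C.f₂_sdiff_subset_comp (Finset.mem_sdiff.2
          ⟨Finset.mem_image_of_mem _ hW, ?_⟩)
        simp only [Finset.mem_singleton]
        intro h
        exact hWn (relabR_inj hx (h.trans (relabR_Icc hx).symm))
      exact hVmax (relabR x W) hmem ((relabR_ssubset_iff hx).2 hTW)
        (lt_of_le_of_lt (relabR_subset_B hx (C.sub₂ hW)) hBU)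
  · intro hV
    rcases Finset.mem_union.1 hV with hf | hf
    · obtain ⟨T, hT, rfl⟩ := Finset.mem_image.1 hf
      obtain ⟨hTne, hTch⟩ := Finset.mem_erase.1 hT
      obtain ⟨hTf, hTS, hTmax⟩ := mem_childrenF.1 hTch
      refine mem_childrenF.2 ⟨memW T hTf hTne, (relabL_ssubset_iff hn).2 hTS, ?_⟩
      intro W hW hTW hWU
      rw [hcomp] at hW
      rcases Finset.mem_union.1 hW with hg | hg
      · obtain ⟨hg, -⟩ := Finset.mem_sdiff.1 hg
        obtain ⟨W', hW', rfl⟩ := Finset.mem_image.1 hg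
        exact hTmax W' hW' ((relabL_ssubset_iff hn).1 hTW) ((relabL_ssubset_iff hn).1 hWU)
      · obtain ⟨hg, -⟩ := Finset.mem_sdiff.1 hg
        have : relabL x n T ⊆ Finset.Icc x (x + n - 1) :=
          hTW.subset.trans (C.f₂_subset_B hg)
        exact hTne (relabL_subset_B hn (C.ne₁ hTf) this)
    · obtain ⟨d, hd, rfl⟩ := Finset.mem_image.1 hf
      obtain ⟨hdf, hdI, hdmax⟩ := mem_childrenF.1 hd
      have hVne : relabR x d ≠ Finset.Icc x (x + n - 1) := fun h =>
        hdI.ne (relabR_inj hx (h.trans (relabR_Icc hx).symm))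
      have hVcomp : relabR x d ∈ rwCompose n x fam₁ fam₂ :=
        C.f₂_sdiff_subset_comp (Finset.mem_sdiff.2
          ⟨Finset.mem_image_of_mem _ hdf, by simpa using hVne⟩)
      refine mem_childrenF.2 ⟨hVcomp,
        lt_of_le_of_lt (relabR_subset_B hx (C.sub₂ hdf)) hBU, ?_⟩
      intro W hW hVW hWU
      rw [hcomp] at hW
      rcases Finset.mem_union.1 hW with hg | hg
      · obtain ⟨hg, hWB⟩ := Finset.mem_sdiff.1 hg
        rw [Finset.mem_singleton] at hWB
        obtain ⟨T', hT', rfl⟩ := Finset.mem_image.1 hg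
        have hxT' : x ∈ T' := by
          by_contra hxT'
          obtain ⟨a, ha⟩ := (C.ne₂ hdf).image (fun j => x + j - 1)
          have haB : a ∈ Finset.Icc x (x + n - 1) :=
            relabR_subset_B hx (C.sub₂ hdf) ha
          have haW : a ∈ relabL x n T' := hVW.subset ha
          exact Finset.disjoint_left.1 (disjoint_relabL_B hn hxT') haW haB
        have hT'S : T' ⊂ S := (relabL_ssubset_iff hn).1 hWU
        exact hWB (by rw [key T' hT' hT'S hxT', relabL_singleton])
      · obtain ⟨hg, hWB⟩ := Finset.mem_sdiff.1 hg
        rw [Finset.mem_singleton] at hWB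
        obtain ⟨T', hT', rfl⟩ := Finset.mem_image.1 hg
        have hT'I : T' ⊂ Finset.Icc 1 n := Finset.ssubset_iff_subset_ne.2
          ⟨C.sub₂ hT', fun h => hWB (by rw [h, relabR_Icc hx])⟩
        exact hdmax T' hT' ((relabR_ssubset_iff hx).1 hVW) hT'I

/-- labels in the CH2 case. -/
lemma labelsOf_comp_CH2 {S : Finset ℕ} (hred : IsRed fam₂ (Finset.Icc 1 n))
    (hne1 : fam₁ ≠ {{x}}) (hS : S ∈ fam₁) (hc : {x} ∈ childrenF fam₁ S) :
    labelsOf (rwCompose n x fam₁ fam₂) (relabL x n S)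
      = relabL x n (labelsOf fam₁ S) := by
  have hn := C.hn
  have hx := C.hx
  have hlab2 : labelsOf fam₂ (Finset.Icc 1 n) = ∅ := ((isRed_iff _ _).1 hred).1
  have hbi2 : (childrenF fam₂ (Finset.Icc 1 n)).biUnion id = Finset.Icc 1 n := by
    apply subset_antisymm
    · intro a ha
      obtain ⟨T, hT, haT⟩ := Finset.mem_biUnion.1 ha
      exact (mem_childrenF.1 hT).2.1.subset haT
    · intro a ha
      by_contra h
      have : a ∈ labelsOf fam₂ (Finset.Icc 1 n) := Finset.mem_sdiff.2 ⟨ha, h⟩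
      rw [hlab2] at this
      exact absurd this (Finset.notMem_empty a)
  rw [labelsOf, labelsOf, C.childrenF_comp_CH2 hred hne1 hS hc, biUnion_id_union]
  rw [relabL_eq, biUnion_image_relF, relabR_eq, biUnion_image_relF, ← relabR_eq, hbi2,
    relabR_Icc hx, ← relabL_singleton (x := x) (n := n), relabL_eq, ← relF_union,
    ← relF_sdiff _ (hgL hn)]
  congr 2
  have hins : childrenF fam₁ S = insert {x} ((childrenF fam₁ S).erase {x}) :=
    (Finset.insert_erase hc).symm
  conv_rhs => rw [hins]
  rw [Finset.biUnion_insert]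
  exact Finset.union_comm _ _

end Ctx
lemma not_isRed_singleton {fam : Finset (Finset ℕ)} (hne : ∀ S ∈ fam, S.Nonempty)
    (j : ℕ) : ¬ IsRed fam {j} := by
  intro h
  rw [isRed_iff] at h
  have hch : childrenF fam {j} = ∅ := by
    ext T
    simp only [mem_childrenF, Finset.notMem_empty, iff_false]
    rintro ⟨hT, hTs, -⟩
    exact (hne T hT).ne_empty (Finset.ssubset_singleton_iff.1 hTs)
  rw [labelsOf, hch] at h
  simp at h

namespace Ctx

variable {m n x : ℕ} {fam₁ fam₂ : Finset (Finset ℕ)} (C : Ctx m n x fam₁ fam₂)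

omit C in
lemma comp_eq_W (h : ¬ IsRed fam₂ (Finset.Icc 1 n)) :
    rwCompose n x fam₁ fam₂ = fam₁.image (relabL x n) ∪
      (fam₂.image (relabR x) \ {Finset.Icc x (x + n - 1)}) := by
  simp only [rwCompose, if_neg h]

omit C in
lemma comp_eq_R2 (h1 : IsRed fam₂ (Finset.Icc 1 n)) (h2 : fam₁ ≠ {{x}})
    (h3 : {x} ∉ fam₁) :
    rwCompose n x fam₁ fam₂ = fam₁.image (relabL x n) ∪ fam₂.image (relabR x) := by
  simp only [rwCompose, if_pos h1, if_neg h2, if_neg h3]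

include C

lemma x_mem_of_meets_B {T : Finset ℕ} {a : ℕ} (ha : a ∈ relabL x n T)
    (haB : a ∈ Finset.Icc x (x + n - 1)) : x ∈ T := by
  by_contra hxT
  exact Finset.disjoint_left.1 (disjoint_relabL_B C.hn hxT) ha haB

/-- M3: colours of `T₁`-nodes containing `x` (other than the leaf `{x}`) are preserved. -/
lemma isRed_comp_f₁_X : ∀ (k : ℕ) (S : Finset ℕ), S.card ≤ k → S ∈ fam₁ → x ∈ S →
    S ≠ {x} → (IsRed (rwCompose n x fam₁ fam₂) (relabL x n S) ↔ IsRed fam₁ S) := by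
  have hn := C.hn
  have hx := C.hx
  intro k
  induction k with
  | zero =>
    intro S hk hS hxS hSx
    rw [Finset.card_eq_zero.1 (Nat.le_zero.1 hk)] at hxS
    exact absurd hxS (Finset.notMem_empty x)
  | succ k ih =>
    intro S hk hS hxS hSx
    by_cases hlab : x ∈ labelsOf fam₁ S
    · -- the node `S` is the merge point: it is white on both sides.
      have white₁ : ¬ IsRed fam₁ S := by
        intro hr
        rw [isRed_iff] at hr
        rw [hr.1] at hlab
        exact absurd hlab (Finset.notMem_empty x)
      refine iff_of_false ?_ white₁
      have key : ∀ T ∈ fam₁, T ⊂ S → x ∉ T := fun T hT hTS hxT =>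
        label_not_in_below hT hTS hxT hlab
      have hxnot : {x} ∉ fam₁ := by
        intro hxf
        rcases C.lam₁ {x} hxf S hS with h | h | h
        · exact key {x} hxf (Finset.ssubset_iff_subset_ne.2 ⟨h, Ne.symm hSx⟩)
            (Finset.mem_singleton_self x)
        · rcases Finset.subset_singleton_iff.1 h with h' | h'
          · exact (Finset.nonempty_iff_ne_empty.1 ⟨x, hxS⟩) h'
          · exact hSx h'
        · exact Finset.disjoint_left.1 h (Finset.mem_singleton_self x) hxS
      have hBne : relabL x n S ≠ Finset.Icc x (x + n - 1) := by
        intro h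
        exact hSx (relabL_inj hn (h.trans relabL_singleton.symm))
      have hBU : Finset.Icc x (x + n - 1) ⊂ relabL x n S :=
        Finset.ssubset_iff_subset_ne.2 ⟨B_subset_relabL hxS, Ne.symm hBne⟩
      by_cases hred₂ : IsRed fam₂ (Finset.Icc 1 n)
      · -- (R2): the block `B` is a red child of `relabL S`.
        have hne1 : fam₁ ≠ {{x}} := fun h => hxnot (h ▸ Finset.mem_singleton_self _)
        intro hr
        rw [isRed_iff] at hr
        refine hr.2 (Finset.Icc x (x + n - 1)) (mem_childrenF.2 ⟨?_, hBU, ?_⟩)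
          (C.isRed_comp_B.2 hred₂)
        · rw [comp_eq_R2 hred₂ hne1 hxnot]
          exact Finset.mem_union_right _ C.B_mem_f₂
        · intro W hW hBW hWU
          rcases Finset.mem_union.1 (C.comp_subset hW) with hf | hf
          · obtain ⟨T, hT, rfl⟩ := Finset.mem_image.1 hf
            obtain ⟨a, ha⟩ := B_nonempty (x := x) hn
            exact key T hT ((relabL_ssubset_iff hn).1 hWU)
              (C.x_mem_of_meets_B (hBW.subset ha) ha) 
          · exact hBW.not_subset (C.f₂_subset_B hf)
      · -- (W): the merge point inherits a label or a red child from the root of `T₂`.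
        have hcomp := comp_eq_W (x := x) (fam₁ := fam₁) hred₂
        rw [isRed_iff] at hred₂
        push_neg at hred₂
        by_cases hlab2 : labelsOf fam₂ (Finset.Icc 1 n) = ∅
        · obtain ⟨d, hd, hdred⟩ := hred₂ hlab2
          have hdI : d ⊂ Finset.Icc 1 n := (mem_childrenF.1 hd).2.1
          have hdmax := (mem_childrenF.1 hd).2.2
          have hdne : relabR x d ≠ Finset.Icc x (x + n - 1) := fun h =>
            hdI.ne (relabR_inj hx (h.trans (relabR_Icc hx).symm))
          intro hr
          rw [isRed_iff] at hr
          refine hr.2 (relabR x d) (mem_childrenF.2 ⟨?_, ?_, ?_⟩)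
            ((C.isRed_comp_f₂ (mem_childrenF.1 hd).1 hdI.ne).2 hdred)
          · exact C.f₂_sdiff_subset_comp (Finset.mem_sdiff.2
              ⟨Finset.mem_image_of_mem _ (mem_childrenF.1 hd).1, by simpa using hdne⟩)
          · exact lt_of_le_of_lt (relabR_subset_B hx (C.sub₂ (mem_childrenF.1 hd).1)) hBU
          · intro W hW hVW hWU
            rw [hcomp] at hW
            rcases Finset.mem_union.1 hW with hf | hf
            · obtain ⟨T, hT, rfl⟩ := Finset.mem_image.1 hf
              obtain ⟨a, ha⟩ := (C.ne₂ (mem_childrenF.1 hd).1).image (fun j => x + j - 1)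
              have haB : a ∈ Finset.Icc x (x + n - 1) :=
                relabR_subset_B hx (C.sub₂ (mem_childrenF.1 hd).1) ha
              exact key T hT ((relabL_ssubset_iff hn).1 hWU)
                (C.x_mem_of_meets_B (hVW.subset ha) haB)
            · obtain ⟨hf, hWB⟩ := Finset.mem_sdiff.1 hf
              rw [Finset.mem_singleton] at hWB
              obtain ⟨T', hT', rfl⟩ := Finset.mem_image.1 hf
              have hT'I : T' ⊂ Finset.Icc 1 n := Finset.ssubset_iff_subset_ne.2
                ⟨C.sub₂ hT', fun h => hWB (by rw [h, relabR_Icc hx])⟩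
              exact hdmax T' hT' ((relabR_ssubset_iff hx).1 hVW) hT'I
        · obtain ⟨ℓ, hℓ⟩ := Finset.nonempty_iff_ne_empty.2 hlab2
          have hℓI : ℓ ∈ Finset.Icc 1 n := (Finset.mem_sdiff.1 hℓ).1
          have haB : x + ℓ - 1 ∈ Finset.Icc x (x + n - 1) := by
            rw [← relabR_Icc hx]
            exact Finset.mem_image_of_mem _ hℓI
          intro hr
          rw [isRed_iff] at hr
          have hmem : x + ℓ - 1 ∈ labelsOf (rwCompose n x fam₁ fam₂) (relabL x n S) := by
            rw [labelsOf, Finset.mem_sdiff]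
            refine ⟨B_subset_relabL hxS haB, ?_⟩
            intro hmem
            obtain ⟨V, hV, haV⟩ := Finset.mem_biUnion.1 hmem
            obtain ⟨hVc, hVU, -⟩ := mem_childrenF.1 hV
            rw [hcomp] at hVc
            rcases Finset.mem_union.1 hVc with hf | hf
            · obtain ⟨T, hT, rfl⟩ := Finset.mem_image.1 hf
              exact key T hT ((relabL_ssubset_iff hn).1 hVU)
                (C.x_mem_of_meets_B haV haB)
            · obtain ⟨hf, hWB⟩ := Finset.mem_sdiff.1 hf
              rw [Finset.mem_singleton] at hWB
              obtain ⟨T', hT', rfl⟩ := Finset.mem_image.1 hf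
              have hT'I : T' ⊂ Finset.Icc 1 n := Finset.ssubset_iff_subset_ne.2
                ⟨C.sub₂ hT', fun h => hWB (by rw [h, relabR_Icc hx])⟩
              obtain ⟨ℓ', hℓ', hℓ'e⟩ := Finset.mem_image.1 haV
              have : ℓ' = ℓ := by
                have h1 : 1 ≤ ℓ' := (Finset.mem_Icc.1 (C.sub₂ hT' hℓ')).1
                have h2 : 1 ≤ ℓ := (Finset.mem_Icc.1 hℓI).1
                omega
              exact label_not_in_below hT' hT'I (this ▸ hℓ') hℓ
          rw [hr.1] at hmem
          exact absurd hmem (Finset.notMem_empty _)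
    · -- `x` lies in a child `c` of `S`.
      obtain ⟨c, hc, hxc⟩ := exists_child_of_not_label hxS hlab
      have hcf : c ∈ fam₁ := (mem_childrenF.1 hc).1
      have hcS : c ⊂ S := (mem_childrenF.1 hc).2.1
      by_cases hcase : IsRed fam₂ (Finset.Icc 1 n) ∧ c = {x}
      · -- (R3) surgery
        obtain ⟨hred, hcx⟩ := hcase
        have hc' : {x} ∈ childrenF fam₁ S := hcx ▸ hc
        have hne1 : fam₁ ≠ {{x}} := by
          intro h
          rw [h, Finset.mem_singleton] at hS
          exact hSx hS
        rw [isRed_iff, isRed_iff, C.childrenF_comp_CH2 hred hne1 hS hc',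
          C.labelsOf_comp_CH2 hred hne1 hS hc', relabL_eq_empty_iff hn]
        refine and_congr Iff.rfl ?_
        constructor
        · rintro h T hT hTred
          by_cases hTx : T = {x}
          · exact not_isRed_singleton (fun S hS => C.ne₁ hS) x (hTx ▸ hTred)
          · have hxT : x ∉ T := fun hxT =>
              hTx (C.child_x_unique hT hc' hxT (Finset.mem_singleton_self x))
            exact h (relabL x n T) (Finset.mem_union_left _ (Finset.mem_image_of_mem _
              (Finset.mem_erase.2 ⟨hTx, hT⟩)))
              ((C.isRed_comp_f₁_noX (mem_childrenF.1 hT).1 hxT).2 hTred)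
        · rintro h V hV hVred
          rcases Finset.mem_union.1 hV with hf | hf
          · obtain ⟨T, hT, rfl⟩ := Finset.mem_image.1 hf
            obtain ⟨hTx, hTch⟩ := Finset.mem_erase.1 hT
            have hxT : x ∉ T := fun hxT =>
              hTx (C.child_x_unique hTch hc' hxT (Finset.mem_singleton_self x))
            exact h T hTch ((C.isRed_comp_f₁_noX (mem_childrenF.1 hTch).1 hxT).1 hVred)
          · obtain ⟨d, hd, rfl⟩ := Finset.mem_image.1 hf
            have hdI : d ⊂ Finset.Icc 1 n := (mem_childrenF.1 hd).2.1
            exact ((isRed_iff fam₂ (Finset.Icc 1 n)).1 hred).2 d hd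
              ((C.isRed_comp_f₂ (mem_childrenF.1 hd).1 hdI.ne).1 hVred)
      · -- CH1 case
        have Hc : relabL x n c ∈ rwCompose n x fam₁ fam₂ := by
          by_cases hcx : c = {x}
          · have hnred : ¬ IsRed fam₂ (Finset.Icc 1 n) := fun h => hcase ⟨h, hcx⟩
            exact C.f₁_subset_comp_W hnred (Finset.mem_image_of_mem _ hcf)
          · exact C.mem_comp_of_f₁ (Finset.mem_image_of_mem _ hcf)
              (fun hB => hcx (relabL_inj hn (hB.trans relabL_singleton.symm)))
        have hch := C.childrenF_comp_CH1 hc hxc Hc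
        rw [isRed_iff, isRed_iff, hch, C.labelsOf_comp_CH1 hch, relabL_eq_empty_iff hn]
        refine and_congr Iff.rfl ?_
        have htrans : ∀ T ∈ childrenF fam₁ S,
            (IsRed (rwCompose n x fam₁ fam₂) (relabL x n T) ↔ IsRed fam₁ T) := by
          intro T hT
          by_cases hxT : x ∈ T
          · have hTc : T = c := C.child_x_unique hT hc hxT hxc
            by_cases hTx : T = {x}
            · have hnred : ¬ IsRed fam₂ (Finset.Icc 1 n) := fun h =>
                hcase ⟨h, hTc ▸ hTx⟩
              refine iff_of_false ?_ (hTx ▸ not_isRed_singleton (fun S hS => C.ne₁ hS) x)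
              rw [hTx, relabL_singleton]
              rw [C.isRed_comp_B]
              exact hnred
            · exact ih T (Nat.lt_succ_iff.1 (lt_of_lt_of_le
                (Finset.card_lt_card (mem_childrenF.1 hT).2.1) hk))
                (mem_childrenF.1 hT).1 hxT hTx
          · exact C.isRed_comp_f₁_noX (mem_childrenF.1 hT).1 hxT
        constructor
        · intro h T hT hTred
          exact h (relabL x n T) (Finset.mem_image_of_mem _ hT) ((htrans T hT).2 hTred)
        · rintro h V hV hVred
          obtain ⟨T, hT, rfl⟩ := Finset.mem_image.1 hV
          exact h T hT ((htrans T hT).1 hVred)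

end Ctx
lemma subSym_eq (i n : ℕ) : subSym i n = relabL i n := rfl
lemma shiftSym_eq (i : ℕ) : shiftSym i = relabR i := rfl

lemma PhiT_apply (k : ℕ) (fam : Finset (Finset ℕ)) (U : Finset ℕ) :
    PhiT k fam U = if U ∈ fam then
      (if IsRed fam U then (if U = Finset.Icc 1 k then (0 : ℤ) else 1) else -1) else 0 := by
  classical
  rw [PhiT, Finsupp.finset_sum_apply]
  rw [Finset.sum_congr rfl (fun S _ => Finsupp.single_apply)]
  rw [Finset.sum_ite_eq' fam U]

lemma mapDomain_sum_single (r : Finset ℕ → Finset ℕ) (s : Finset (Finset ℕ))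
    (w : Finset ℕ → ℤ) :
    Finsupp.mapDomain r (∑ S ∈ s, Finsupp.single S (w S))
      = ∑ S ∈ s, Finsupp.single (r S) (w S) := by
  classical
  induction s using Finset.induction_on with
  | empty => simp
  | insert _ _ h ih =>
    rw [Finset.sum_insert h, Finset.sum_insert h, Finsupp.mapDomain_add,
      Finsupp.mapDomain_single, ih]

lemma sum_single_eval_mem {r : Finset ℕ → Finset ℕ} (hr : Function.Injective r)
    {s : Finset (Finset ℕ)} (w : Finset ℕ → ℤ) {S₀ : Finset ℕ} (hS₀ : S₀ ∈ s) :
    (∑ S ∈ s, Finsupp.single (r S) (w S)) (r S₀) = w S₀ := by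
  classical
  rw [Finsupp.finset_sum_apply]
  rw [Finset.sum_eq_single_of_mem S₀ hS₀]
  · rw [Finsupp.single_apply, if_pos rfl]
  · intro S hS hne
    rw [Finsupp.single_apply, if_neg (fun h => hne (hr h))]

lemma sum_single_eval_notmem {r : Finset ℕ → Finset ℕ}
    {s : Finset (Finset ℕ)} (w : Finset ℕ → ℤ) {U : Finset ℕ} (hU : U ∉ s.image r) :
    (∑ S ∈ s, Finsupp.single (r S) (w S)) U = 0 := by
  classical
  rw [Finsupp.finset_sum_apply]
  apply Finset.sum_eq_zero
  intro S hS
  rw [Finsupp.single_apply, if_neg]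
  intro h
  exact hU (h ▸ Finset.mem_image_of_mem r hS)

namespace Ctx

variable {m n x : ℕ} {fam₁ fam₂ : Finset (Finset ℕ)} (C : Ctx m n x fam₁ fam₂)

omit C in
lemma comp_eq_R1 (h1 : IsRed fam₂ (Finset.Icc 1 n)) (h2 : fam₁ = {{x}}) :
    rwCompose n x fam₁ fam₂ = fam₂.image (relabR x) := by
  simp only [rwCompose, if_pos h1, if_pos h2]

include C

lemma hm : 1 ≤ m := le_trans C.hx C.hxm

lemma root₁ : Finset.Icc 1 m ∈ fam₁ := C.h₁.2.1

lemma m1x1 (h : fam₁ = {{x}}) : m = 1 ∧ x = 1 := by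
  have hr := C.root₁
  rw [h, Finset.mem_singleton] at hr
  have h1 : (1 : ℕ) ∈ Finset.Icc 1 m := Finset.mem_Icc.2 ⟨le_refl 1, C.hm⟩
  have hmm : m ∈ Finset.Icc 1 m := Finset.mem_Icc.2 ⟨C.hm, le_refl m⟩
  rw [hr, Finset.mem_singleton] at h1 hmm
  omega

end Ctx
noncomputable def wgt (k : ℕ) (fam : Finset (Finset ℕ)) (S : Finset ℕ) : ℤ :=
  if IsRed fam S then (if S = Finset.Icc 1 k then 0 else 1) else -1

lemma PhiT_eq (k : ℕ) (fam : Finset (Finset ℕ)) :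
    PhiT k fam = ∑ S ∈ fam, Finsupp.single S (wgt k fam S) := rfl

lemma PhiT_apply' (k : ℕ) (fam : Finset (Finset ℕ)) (U : Finset ℕ) :
    PhiT k fam U = if U ∈ fam then wgt k fam U else 0 := PhiT_apply k fam U

theorem phiT_morphism_aux (m n x : ℕ) (fam₁ fam₂ : Finset (Finset ℕ))
    (h₁ : IsRWTree m fam₁)
    (h₂ : IsRWTree n fam₂)
    (hx : 1 ≤ x) (hxm : x ≤ m) :
    PhiT (m + n - 1) (rwCompose n x fam₁ fam₂)
      = ffCompose n x (PhiT m fam₁) (PhiT n fam₂) := by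
  classical
  have C : Ctx m n x fam₁ fam₂ := ⟨hx, hxm, h₁, h₂⟩
  have hn := C.hn
  have hm := C.hm
  have hL : Function.Injective (relabL x n) := relabL_inj hn
  have hR : Function.Injective (relabR x) := relabR_inj hx
  have hBsub : Finset.Icc x (x + n - 1) ⊆ Finset.Icc 1 (m + n - 1) :=
    Finset.Icc_subset_Icc (by omega) (by omega)
  ext U
  rw [ffCompose, Finsupp.add_apply, Finsupp.add_apply, subSym_eq, shiftSym_eq,
    PhiT_eq m fam₁, PhiT_eq n fam₂, mapDomain_sum_single, mapDomain_sum_single,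
    PhiT_apply']
  by_cases hUB : U = Finset.Icc x (x + n - 1)
  · -- U = B
    have e0 : Finsupp.single (Finset.Icc x (x + n - 1)) (1 : ℤ) U = 1 := by
      rw [Finsupp.single_apply, if_pos hUB.symm]
    have e2 : (∑ T ∈ fam₂, Finsupp.single (relabR x T) (wgt n fam₂ T)) U
        = wgt n fam₂ (Finset.Icc 1 n) := by
      rw [hUB, ← relabR_Icc hx]
      exact sum_single_eval_mem hR _ C.h₂.2.1
    have w2root : wgt n fam₂ (Finset.Icc 1 n)
        = if IsRed fam₂ (Finset.Icc 1 n) then 0 else -1 := by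
      rw [wgt]
      by_cases h : IsRed fam₂ (Finset.Icc 1 n) <;> simp [h]
    rw [e0, e2, w2root]
    by_cases hxf : {x} ∈ fam₁
    · have e1 : (∑ S ∈ fam₁, Finsupp.single (relabL x n S) (wgt m fam₁ S)) U
          = wgt m fam₁ {x} := by
        rw [hUB, ← relabL_singleton (x := x) (n := n)]
        exact sum_single_eval_mem hL _ hxf
      have w1x : wgt m fam₁ {x} = -1 := by
        rw [wgt, if_neg (not_isRed_singleton (fun S hS => C.ne₁ hS) x)]
      rw [e1, w1x]
      by_cases hred₂ : IsRed fam₂ (Finset.Icc 1 n)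
      · by_cases hful : fam₁ = {{x}}
        · -- (R1)
          obtain ⟨hm1, hx1⟩ := C.m1x1 hful
          have hin : U ∈ rwCompose n x fam₁ fam₂ := by
            rw [Ctx.comp_eq_R1 hred₂ hful, hUB]
            exact C.B_mem_f₂
          have hroot : U = Finset.Icc 1 (m + n - 1) := by
            rw [hUB, hx1, hm1]
          rw [if_pos hin, wgt, if_pos (by rw [hUB]; exact C.isRed_comp_B.2 hred₂),
            if_pos hroot, if_pos hred₂]
          norm_num
        · -- (R3)
          have hout : U ∉ rwCompose n x fam₁ fam₂ := by
            rw [Ctx.comp_eq_R3 C hred₂ hful hxf, hUB]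
            simp
          rw [if_neg hout, if_pos hred₂]
          norm_num
      · -- (W), {x} ∈ fam₁
        have hin : U ∈ rwCompose n x fam₁ fam₂ := by
          rw [Ctx.comp_eq_W hred₂, hUB, ← relabL_singleton (x := x) (n := n)]
          exact Finset.mem_union_left _ (Finset.mem_image_of_mem _ hxf)
        rw [if_pos hin, wgt, if_neg (by rw [hUB, C.isRed_comp_B]; exact hred₂),
          if_neg hred₂]
        norm_num
    · have e1 : (∑ S ∈ fam₁, Finsupp.single (relabL x n S) (wgt m fam₁ S)) U = 0 := by
        apply sum_single_eval_notmem
        intro hmem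
        obtain ⟨S, hS, hSU⟩ := Finset.mem_image.1 hmem
        have : S = {x} := relabL_subset_B hn (C.ne₁ hS) (by rw [hSU, hUB])
        exact hxf (this ▸ hS)
      rw [e1]
      by_cases hred₂ : IsRed fam₂ (Finset.Icc 1 n)
      · -- (R2)
        have hful : fam₁ ≠ {{x}} := fun h => hxf (h ▸ Finset.mem_singleton_self _)
        have hin : U ∈ rwCompose n x fam₁ fam₂ := by
          rw [Ctx.comp_eq_R2 hred₂ hful hxf, hUB]
          exact Finset.mem_union_right _ C.B_mem_f₂
        have hroot : U ≠ Finset.Icc 1 (m + n - 1) := by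
          intro h
          have h2 : relabL x n {x} = relabL x n (Finset.Icc 1 m) := by
            rw [relabL_singleton, relabL_Icc hx hn hxm, ← hUB, h]
          exact hxf ((hL h2) ▸ C.root₁)
        rw [if_pos hin, wgt, if_pos (by rw [hUB]; exact C.isRed_comp_B.2 hred₂),
          if_neg hroot, if_pos hred₂]
        norm_num
      · -- (W), {x} ∉ fam₁
        have hout : U ∉ rwCompose n x fam₁ fam₂ := by
          rw [Ctx.comp_eq_W hred₂]
          intro hin
          rcases Finset.mem_union.1 hin with hf | hf
          · obtain ⟨S, hS, hSU⟩ := Finset.mem_image.1 hf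
            have : S = {x} := relabL_subset_B hn (C.ne₁ hS) (by rw [hSU, hUB])
            exact hxf (this ▸ hS)
          · exact (Finset.mem_sdiff.1 hf).2 (by simpa using hUB)
        rw [if_neg hout, if_neg hred₂]
        norm_num
  · -- U ≠ B
    have e0 : Finsupp.single (Finset.Icc x (x + n - 1)) (1 : ℤ) U = 0 := by
      rw [Finsupp.single_apply, if_neg (fun h => hUB h.symm)]
    rw [e0]
    by_cases hU2 : U ∈ fam₂.image (relabR x)
    · obtain ⟨T, hT, rfl⟩ := Finset.mem_image.1 hU2
      have hTn : T ≠ Finset.Icc 1 n := fun h => hUB (by rw [h, relabR_Icc hx])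
      have hsub' : relabR x T ⊆ Finset.Icc x (x + n - 1) :=
        relabR_subset_B hx (C.sub₂ hT)
      have e2 : (∑ T' ∈ fam₂, Finsupp.single (relabR x T') (wgt n fam₂ T')) (relabR x T)
          = wgt n fam₂ T := sum_single_eval_mem hR _ hT
      have e1 : (∑ S ∈ fam₁, Finsupp.single (relabL x n S) (wgt m fam₁ S)) (relabR x T)
          = 0 := by
        apply sum_single_eval_notmem
        intro hmem
        exact hUB (C.f₁_cap_B hmem hsub')
      have hin : relabR x T ∈ rwCompose n x fam₁ fam₂ :=
        C.f₂_sdiff_subset_comp (Finset.mem_sdiff.2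
          ⟨Finset.mem_image_of_mem _ hT, by simpa using hUB⟩)
      have hroot : relabR x T ≠ Finset.Icc 1 (m + n - 1) := by
        intro h
        have hBB : Finset.Icc x (x + n - 1) = Finset.Icc 1 (m + n - 1) :=
          subset_antisymm hBsub (h ▸ hsub')
        exact hUB (h.trans hBB.symm)
      have hroot2 : T ≠ Finset.Icc 1 n := hTn
      rw [e1, e2, if_pos hin, wgt, wgt, if_neg hroot, if_neg hroot2]
      by_cases hTr : IsRed fam₂ T
      · rw [if_pos ((C.isRed_comp_f₂ hT hTn).2 hTr), if_pos hTr]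
        norm_num
      · rw [if_neg (fun h => hTr ((C.isRed_comp_f₂ hT hTn).1 h)), if_neg hTr]
        norm_num
    · have e2 : (∑ T ∈ fam₂, Finsupp.single (relabR x T) (wgt n fam₂ T)) U = 0 :=
        sum_single_eval_notmem _ hU2
      rw [e2]
      by_cases hU1 : U ∈ fam₁.image (relabL x n)
      · obtain ⟨S, hS, rfl⟩ := Finset.mem_image.1 hU1
        have hSx : S ≠ {x} := fun h => hUB (by rw [h, relabL_singleton])
        have e1 : (∑ S' ∈ fam₁, Finsupp.single (relabL x n S') (wgt m fam₁ S'))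
            (relabL x n S) = wgt m fam₁ S := sum_single_eval_mem hL _ hS
        have hin : relabL x n S ∈ rwCompose n x fam₁ fam₂ :=
          C.mem_comp_of_f₁ (Finset.mem_image_of_mem _ hS) hUB
        rw [e1, if_pos hin, wgt, wgt]
        by_cases hxS : x ∈ S
        · have hiff := C.isRed_comp_f₁_X S.card S le_rfl hS hxS hSx
          have hroot : relabL x n S = Finset.Icc 1 (m + n - 1) ↔ S = Finset.Icc 1 m := by
            constructor
            · intro h
              exact hL (h.trans (relabL_Icc hx hn hxm).symm)
            · intro h
              rw [h, relabL_Icc hx hn hxm]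
          by_cases hred : IsRed fam₁ S
          · rw [if_pos (hiff.2 hred), if_pos hred]
            by_cases hr2 : S = Finset.Icc 1 m
            · rw [if_pos (hroot.2 hr2), if_pos hr2]
              norm_num
            · rw [if_neg (fun h => hr2 (hroot.1 h)), if_neg hr2]
              norm_num
          · rw [if_neg (fun h => hred (hiff.1 h)), if_neg hred]
            norm_num
        · have hiff := C.isRed_comp_f₁_noX hS hxS
          have hroot : relabL x n S ≠ Finset.Icc 1 (m + n - 1) := by
            intro h
            have hxB : x ∈ Finset.Icc x (x + n - 1) := Finset.mem_Icc.2 (by omega)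
            have : x ∈ relabL x n S := h ▸ hBsub hxB
            exact Finset.disjoint_left.1 (disjoint_relabL_B hn hxS) this hxB
          have hroot2 : S ≠ Finset.Icc 1 m := by
            intro h
            exact hxS (h ▸ Finset.mem_Icc.2 ⟨hx, hxm⟩)
          rw [if_neg hroot, if_neg hroot2]
          by_cases hred : IsRed fam₁ S
          · rw [if_pos (hiff.2 hred), if_pos hred]
            norm_num
          · rw [if_neg (fun h => hred (hiff.1 h)), if_neg hred]
            norm_num
      · have e1 : (∑ S ∈ fam₁, Finsupp.single (relabL x n S) (wgt m fam₁ S)) U = 0 :=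
          sum_single_eval_notmem _ hU1
        have hout : U ∉ rwCompose n x fam₁ fam₂ := by
          intro hin
          rcases Finset.mem_union.1 (C.comp_subset hin) with hf | hf
          exacts [hU1 hf, hU2 hf]
        rw [e1, if_neg hout]
        norm_num

end AuxProof

/-- `Φ` is a morphism of operads from recursively labelled red and
white trees to formal fractions. -/
theorem phiT_morphism (m n x : ℕ) (fam₁ fam₂ : Finset (Finset ℕ))
    (h₁ : IsRWTree m fam₁) (hr₁ : IsRecursive fam₁)
    (h₂ : IsRWTree n fam₂) (hr₂ : IsRecursive fam₂)
    (hx : 1 ≤ x) (hxm : x ≤ m) :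
    PhiT (m + n - 1) (rwCompose n x fam₁ fam₂)
      = ffCompose n x (PhiT m fam₁) (PhiT n fam₂) := by
  exact phiT_morphism_aux m n x fam₁ fam₂ h₁ h₂ hx hxm
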